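/- Let Q be an n×n real nonnegative positive semidefinite matrix of rank s, let r ≥ s be a positive integer, let B be an n×s matrix whose columns form a basis of the column space of Q, and let Q_V be the unique s×n matrix with B·Q_V = Q. Then Q admits a factorization Q = U·Uᵀ with U an n×r' entrywise nonnegative matrix for some r' ≤ r if and only if there exist r' ≤ r and an r'×s real matrix H such that (i) the matrix H·Q_V is entrywise nonnegative, and (ii) (H·Q_V)ᵀ·(H·Q_V) = Q. -/

import Mathlib

open Matrix

lemma range_mulVecLin_self_mul_transpose {n r : ℕ} (U : Matrix (Fin n) (Fin r) ℝ) :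
    LinearMap.range (U * Uᵀ).mulVecLin = LinearMap.range U.mulVecLin := by
  have hle : LinearMap.range (U * Uᵀ).mulVecLin ≤ LinearMap.range U.mulVecLin := by
    rintro x ⟨v, rfl⟩
    exact ⟨Uᵀ *ᵥ v, by rw [mulVecLin_apply, mulVecLin_apply, ← mulVec_mulVec]⟩
  refine Submodule.eq_of_le_of_finrank_le hle ?_
  have h1 : (U * Uᵀ).rank = U.rank := rank_self_mul_transpose U
  simpa [Matrix.rank] using h1.ge

/-- A nonnegative PSD matrix `Q` of rank `s` admits a completely positive factorization
`Q = U * Uᵀ` of inner dimension `r' ≤ r` iff there is an `r' × s` matrix `H` such that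
`H * Q_V` is entrywise nonnegative and `(H * Q_V)ᵀ * (H * Q_V) = Q`, where `B * Q_V = Q`
with the columns of `B` a basis of the column space of `Q`. -/
theorem cp_factorization_iff (n s r : ℕ) (hr : s ≤ r) (hrpos : 1 ≤ r)
    (Q : Matrix (Fin n) (Fin n) ℝ)
    (hQnn : ∀ i j, 0 ≤ Q i j) (hQpsd : Q.PosSemidef) (hrank : Q.rank = s)
    (B : Matrix (Fin n) (Fin s) ℝ)
    (hBind : LinearIndependent ℝ (fun j : Fin s => Bᵀ j))
    (hBspan : Submodule.span ℝ (Set.range (fun j : Fin s => Bᵀ j)) =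
      Submodule.span ℝ (Set.range (fun j : Fin n => Qᵀ j)))
    (QV : Matrix (Fin s) (Fin n) ℝ) (hQV : B * QV = Q) :
    (∃ r' : ℕ, r' ≤ r ∧ ∃ U : Matrix (Fin n) (Fin r') ℝ,
        (∀ i j, 0 ≤ U i j) ∧ U * Uᵀ = Q) ↔
    (∃ r' : ℕ, r' ≤ r ∧ ∃ H : Matrix (Fin r') (Fin s) ℝ,
        (∀ i j, 0 ≤ (H * QV) i j) ∧ (H * QV)ᵀ * (H * QV) = Q) := by
  have hsym : Qᵀ = Q := by
    rw [← conjTranspose_eq_transpose_of_trivial]; exact hQpsd.1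
  constructor
  · rintro ⟨r', hr', U, hUnn, hUQ⟩
    refine ⟨r', hr', ?_⟩
    -- each column of U lies in the span of the rows of QV
    have hQspan : Submodule.span ℝ (Set.range Q) ≤ Submodule.span ℝ (Set.range QV) := by
      rw [Submodule.span_le]
      rintro _ ⟨i, rfl⟩
      have hQi : Q i = ∑ k, B i k • QV k := by
        funext x
        rw [← hQV, mul_apply, Finset.sum_apply]
        simp [Pi.smul_apply]
      rw [hQi]
      exact Submodule.sum_smul_mem _ _ fun k _ => Submodule.subset_span ⟨k, rfl⟩
    have hcol : ∀ j : Fin r', Uᵀ j ∈ Submodule.span ℝ (Set.range QV) := by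
      intro j
      have h1 : Uᵀ j ∈ LinearMap.range U.mulVecLin :=
        ⟨Pi.single j 1, by rw [mulVecLin_apply, mulVec_single_one]; rfl⟩
      rw [← range_mulVecLin_self_mul_transpose, hUQ, Matrix.range_mulVecLin] at h1
      change Uᵀ j ∈ Submodule.span ℝ (Set.range Qᵀ) at h1
      rw [hsym] at h1
      exact hQspan h1
    have hex : ∀ j : Fin r', ∃ c : Fin s → ℝ, ∑ k, c k • QV k = Uᵀ j := by
      intro j
      exact (Submodule.mem_span_range_iff_exists_fun ℝ).mp (hcol j)
    choose H hH using hex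
    have hHQV : Matrix.of H * QV = Uᵀ := by
      ext j i
      rw [mul_apply]
      have := congrFun (hH j) i
      simpa [Finset.sum_apply] using this
    refine ⟨Matrix.of H, ?_, ?_⟩
    · intro i j
      rw [hHQV]
      exact hUnn j i
    · rw [hHQV, transpose_transpose, hUQ]
  · rintro ⟨r', hr', H, hnn, hfact⟩
    exact ⟨r', hr', (H * QV)ᵀ, fun i j => hnn j i, by rw [transpose_transpose, hfact]⟩
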